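/- Let M be a commutative monoid, regarded as an L-structure, that satisfies exactly the same L-sentences as ℕ⁺. Then every non-empty set D ⊆ Mⁿ that is definable with parameters from M has a ≼-minimal element: some d̄ ∈ D such that every ē ∈ D with ē ≼ d̄ equals d̄. -/

import Mathlib

open FirstOrder Language

/-- The language `L` with one binary function symbol `·` and one constant symbol `1`. -/
def L : FirstOrder.Language :=
  ⟨fun n => match n with | 0 => Unit | 2 => Unit | _ => Empty, fun _ => Empty⟩

/-- Any monoid is an `L`-structure, with `·` interpreted as multiplication and `1` as the
identity. In particular `ℕ+` is the standard model of Skolem arithmetic, and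
`Multiplicative ℕ` is the additive `L`-structure `(ℕ, +, 0)`. -/
instance (M : Type*) [Monoid M] : L.Structure M where
  funMap {n} f x :=
    match n, f, x with
    | 0, _, _ => 1
    | 2, _, x => x 0 * x 1
  RelMap r _ := r.elim

/-- The relation `≼` on tuples: `a ≼ b` iff `a = b`, or `a m ∣ b m` where `m` is the
least index at which `a` and `b` differ. -/
def preceq {M : Type*} [Monoid M] {n : ℕ} (a b : Fin n → M) : Prop :=
  a = b ∨ ∃ m : Fin n, (∀ i, i < m → a i = b i) ∧ a m ≠ b m ∧ a m ∣ b m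

/-! ### Auxiliary formulas -/

/-- Multiplication of terms. -/
def mulT {α : Type*} (t u : L.Term α) : L.Term α :=
  Term.func (l := 2) (() : L.Functions 2) ![t, u]

@[simp] lemma realize_mulT {M : Type*} [Monoid M] {α : Type*} (v : α → M) (t u : L.Term α) :
    (mulT t u).realize v = t.realize v * u.realize v := rfl

/-- Divisibility formula: `x ∣ y`. -/
noncomputable def dvdF {α : Type*} (x y : α) : L.Formula α :=
  Formula.iExs (Fin 1)
    (Term.equal (mulT (Term.var (Sum.inl x)) (Term.var (Sum.inr 0)))
      (Term.var (Sum.inl y)))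

@[simp] lemma realize_dvdF {M : Type*} [Monoid M] {α : Type*} (x y : α) (v : α → M) :
    (dvdF x y).Realize v ↔ v x ∣ v y := by
  simp only [dvdF, Formula.realize_iExs, id_eq, Formula.realize_equal, realize_mulT,
    Term.realize_var, Sum.elim_inl, Sum.elim_inr]
  constructor
  · rintro ⟨i, hi⟩; exact ⟨i 0, hi.symm⟩
  · rintro ⟨z, hz⟩; exact ⟨fun _ => z, hz.symm⟩

/-- Formula saying that the `e`-tuple (left variables) is `≼` the `d`-tuple (right
variables). -/
noncomputable def preceqF (n : ℕ) : L.Formula (Fin n ⊕ Fin n) :=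
  BoundedFormula.iInf
      (fun i : Fin n => Term.equal (Term.var (Sum.inl i)) (Term.var (Sum.inr i))) ⊔
    BoundedFormula.iSup (fun m : Fin n =>
      BoundedFormula.iInf
          (fun i : {i : Fin n // i < m} => Term.equal (Term.var (Sum.inl i.1)) (Term.var (Sum.inr i.1))) ⊓
        (∼(Term.equal (Term.var (Sum.inl m)) (Term.var (Sum.inr m))) ⊓
          dvdF (Sum.inl m) (Sum.inr m)))

lemma realize_preceqF {M : Type*} [Monoid M] {n : ℕ} (v : Fin n ⊕ Fin n → M) :
    (preceqF n).Realize v ↔ preceq (v ∘ Sum.inl) (v ∘ Sum.inr) := by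
  simp only [preceqF, preceq, Formula.Realize]
  rw [BoundedFormula.realize_sup]
  constructor
  · rintro (h | h)
    · left
      rw [BoundedFormula.realize_iInf] at h
      funext i
      simpa [Term.equal] using h i
    · right
      rw [BoundedFormula.realize_iSup] at h
      obtain ⟨m, hm⟩ := h
      rw [BoundedFormula.realize_inf, BoundedFormula.realize_iInf,
        BoundedFormula.realize_inf, BoundedFormula.realize_not] at hm
      obtain ⟨h1, h2, h3⟩ := hm
      refine ⟨m, fun i hi => ?_, ?_, ?_⟩
      · simpa [Term.equal] using h1 ⟨i, hi⟩
      · simpa [Term.equal] using h2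
      · exact (realize_dvdF (Sum.inl m) (Sum.inr m) v).1 h3
  · rintro (h | ⟨m, h1, h2, h3⟩)
    · left
      rw [BoundedFormula.realize_iInf]
      intro i
      simpa [Term.equal] using congrFun h i
    · right
      rw [BoundedFormula.realize_iSup]
      refine ⟨m, ?_⟩
      rw [BoundedFormula.realize_inf, BoundedFormula.realize_iInf,
        BoundedFormula.realize_inf, BoundedFormula.realize_not]
      refine ⟨fun ⟨i, hi⟩ => ?_, by simpa [Term.equal] using h2, ?_⟩
      · simpa [Term.equal] using h1 i hi
      · exact (realize_dvdF (Sum.inl m) (Sum.inr m) v).2 h3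

section MinSentence

variable (n k : ℕ) (φ : L.Formula (Fin n ⊕ Fin k))

/-- The inner formula: variables `inl inl` are parameters `c`, `inl inr` is the candidate
minimum `d`, `inr` is the competitor `e`; it says `φ(e,c) ∧ e ≼ d → e = d`. -/
noncomputable def innerF : L.Formula ((Fin k ⊕ Fin n) ⊕ Fin n) :=
  ((φ.relabel (Sum.elim Sum.inr (Sum.inl ∘ Sum.inl)) ⊓
      (preceqF n).relabel (Sum.elim Sum.inr (Sum.inl ∘ Sum.inr))).imp
    (BoundedFormula.iInf (fun i : Fin n =>
      Term.equal (Term.var (Sum.inr i)) (Term.var (Sum.inl (Sum.inr i))))))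

lemma realize_innerF {M : Type*} [Monoid M] (c : Fin k → M) (d e : Fin n → M) :
    (innerF n k φ).Realize (Sum.elim (Sum.elim c d) e) ↔
      ((φ.Realize (Sum.elim e c) ∧ preceq e d) → e = d) := by
  rw [innerF, Formula.realize_imp, Formula.realize_inf, Formula.realize_relabel,
    Formula.realize_relabel]
  have h1 : Sum.elim (Sum.elim c d) e ∘ Sum.elim Sum.inr (Sum.inl ∘ Sum.inl) = Sum.elim e c := by
    funext x; cases x <;> rfl
  have h2 : Sum.elim (Sum.elim c d) e ∘ Sum.elim Sum.inr (Sum.inl ∘ Sum.inr) = Sum.elim e d := by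
    funext x; cases x <;> rfl
  rw [h1, h2, realize_preceqF]
  have h3 : (Sum.elim e d : Fin n ⊕ Fin n → M) ∘ Sum.inl = e := rfl
  have h4 : (Sum.elim e d : Fin n ⊕ Fin n → M) ∘ Sum.inr = d := rfl
  rw [h3, h4]
  refine imp_congr Iff.rfl ?_
  show BoundedFormula.Realize _ _ _ ↔ _
  rw [BoundedFormula.realize_iInf]
  constructor
  · intro h; funext i; simpa [Term.equal] using h i
  · intro h i; simpa [Term.equal] using congrFun h i

/-- `φ(d,c) ∧ ∀ e, (φ(e,c) ∧ e ≼ d → e = d)`, with variables `inl` the parameters and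
`inr` the tuple `d`. -/
noncomputable def goodF : L.Formula (Fin k ⊕ Fin n) :=
  (φ.relabel Sum.swap) ⊓ Formula.iAlls (Fin n) (innerF n k φ)

lemma realize_goodF {M : Type*} [Monoid M] (c : Fin k → M) (d : Fin n → M) :
    (goodF n k φ).Realize (Sum.elim c d) ↔
      (φ.Realize (Sum.elim d c) ∧
        ∀ e, φ.Realize (Sum.elim e c) → preceq e d → e = d) := by
  rw [goodF, Formula.realize_inf, Formula.realize_relabel, Formula.realize_iAlls]
  have h1 : Sum.elim c d ∘ Sum.swap = Sum.elim d c := by funext x; cases x <;> rfl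
  rw [h1]
  refine and_congr Iff.rfl ?_
  refine forall_congr' fun e => ?_
  have h2 : (fun a => Sum.elim (Sum.elim c d) e a) = Sum.elim (Sum.elim c d) e := by
    funext x; rfl
  rw [h2, realize_innerF]
  tauto

/-- The minimality sentence associated to a formula `φ` in `n + k` variables. -/
noncomputable def minSentence : L.Sentence :=
  Formula.iAlls (Fin k)
    (((Formula.iExs (Fin n) (φ.relabel Sum.swap)).imp
      (Formula.iExs (Fin n) (goodF n k φ))).relabel (Sum.inr : Fin k → Empty ⊕ Fin k))

lemma realize_minSentence {M : Type*} [Monoid M] :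
    (M ⊨ minSentence n k φ) ↔
      ∀ c : Fin k → M, (∃ a, φ.Realize (Sum.elim a c)) →
        ∃ d, φ.Realize (Sum.elim d c) ∧
          ∀ e, φ.Realize (Sum.elim e c) → preceq e d → e = d := by
  rw [Sentence.Realize, minSentence, Formula.realize_iAlls]
  refine forall_congr' fun c => ?_
  rw [Formula.realize_relabel]
  have hc : ((fun a => Sum.elim (default : Empty → M) c a) ∘ Sum.inr) = c := rfl
  rw [hc, Formula.realize_imp, Formula.realize_iExs, Formula.realize_iExs]
  refine imp_congr ?_ ?_
  · refine exists_congr fun a => ?_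
    rw [Formula.realize_relabel]
    have h2 : Sum.elim c a ∘ Sum.swap = Sum.elim a c := by funext x; cases x <;> rfl
    rw [h2]
  · refine exists_congr fun d => ?_
    rw [realize_goodF]

end MinSentence

/-- In any model of Skolem arithmetic, every non-empty set definable with parameters has a
`≼`-minimal element. -/
theorem definable_set_has_minimal {M : Type*} [CommMonoid M]
    (hM : ∀ s : L.Sentence, M ⊨ s ↔ ℕ+ ⊨ s)
    (n : ℕ) (D : Set (Fin n → M)) (hD : D.Nonempty)
    (hdef : ∃ (k : ℕ) (φ : L.Formula (Fin n ⊕ Fin k)) (c : Fin k → M),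
      D = {a | φ.Realize (Sum.elim a c)}) :
    ∃ d ∈ D, ∀ e ∈ D, preceq e d → e = d := by
  obtain ⟨k, φ, c, rfl⟩ := hdef
  -- the minimality sentence holds in ℕ+
  have hpnat : ℕ+ ⊨ minSentence n k φ := by
    rw [realize_minSentence]
    rintro c' ⟨a, ha⟩
    have hwf : WellFounded
        (Pi.Lex (· < · : Fin n → Fin n → Prop)
          (fun {_} => (· < · : ℕ+ → ℕ+ → Prop))) :=
      Pi.Lex.wellFounded _ (fun _ => wellFounded_lt)
    obtain ⟨d, hdS, hmin⟩ := hwf.has_min {x | φ.Realize (Sum.elim x c')} ⟨a, ha⟩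
    refine ⟨d, hdS, fun e he hpre => ?_⟩
    rcases hpre with h | ⟨m, h1, h2, h3⟩
    · exact h
    · exact absurd (⟨m, fun j hj => h1 j hj, lt_of_le_of_ne (PNat.le_of_dvd h3) h2⟩ :
        Pi.Lex _ _ e d) (hmin e he)
  have hMst : M ⊨ minSentence n k φ := (hM _).2 hpnat
  rw [realize_minSentence] at hMst
  obtain ⟨a, ha⟩ := hD
  obtain ⟨d, hd, hmin⟩ := hMst c ⟨a, ha⟩
  exact ⟨d, hd, fun e he hpre => hmin e he hpre⟩
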